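/- Graham's LPT approximation bound: suppose the weights are processed in nonincreasing order (w_1 ≥ w_2 ≥ … ≥ w_F ≥ 0), let L : Fin N → ℝ be the final machine loads produced by the greedy algorithm on this sorted list, and let OPT be the minimum over all assignments x : Fin F → Fin N of the maximum machine load max_{j} ∑_{i : x i = j} w_i. Then max_{j} L j ≤ (4/3 − 1/(3N)) · OPT. -/

import Mathlib

open Finset

/-- The machine of minimal current load, ties broken by lowest machine index. -/
noncomputable def minIdx {N : ℕ} [NeZero N] (loads : Fin N → ℝ) : Fin N :=
  (Finset.univ.filter fun j => ∀ i, loads j ≤ loads i).min' (by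
    classical
    obtain ⟨j, -, hj⟩ := Finset.exists_min_image (Finset.univ : Finset (Fin N)) loads
      Finset.univ_nonempty
    exact ⟨j, Finset.mem_filter.mpr ⟨Finset.mem_univ j, fun i => hj i (Finset.mem_univ i)⟩⟩)

/-- Final machine loads of the list-scheduling greedy algorithm: process the
weights in list order, starting from all-zero loads, each time adding the weight
to a machine of minimal current cumulative load (lowest index on ties). -/
noncomputable def greedyLoads (N : ℕ) [NeZero N] (ws : List ℝ) : Fin N → ℝ :=
  ws.foldl
    (fun loads w => Function.update loads (minIdx loads) (loads (minIdx loads) + w))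
    (fun _ => 0)

lemma minIdx_le {N : ℕ} [NeZero N] (loads : Fin N → ℝ) (i : Fin N) :
    loads (minIdx loads) ≤ loads i := by
  classical
  have h := Finset.min'_mem (Finset.univ.filter fun j => ∀ i, loads j ≤ loads i) (by
    obtain ⟨j, -, hj⟩ := Finset.exists_min_image (Finset.univ : Finset (Fin N)) loads
      Finset.univ_nonempty
    exact ⟨j, Finset.mem_filter.mpr ⟨Finset.mem_univ j, fun i => hj i (Finset.mem_univ i)⟩⟩)
  exact (Finset.mem_filter.mp h).2 i

/-- loads after processing the first `t` weights. -/
noncomputable def loadsAt (N : ℕ) [NeZero N] (ws : List ℝ) (t : ℕ) : Fin N → ℝ :=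
  greedyLoads N (ws.take t)

lemma loadsAt_zero (N : ℕ) [NeZero N] (ws : List ℝ) : loadsAt N ws 0 = fun _ => 0 := by
  simp [loadsAt, greedyLoads]

lemma loadsAt_length (N : ℕ) [NeZero N] (ws : List ℝ) :
    loadsAt N ws ws.length = greedyLoads N ws := by
  simp [loadsAt]

lemma loadsAt_succ (N : ℕ) [NeZero N] (ws : List ℝ) (t : ℕ) (ht : t < ws.length) :
    loadsAt N ws (t + 1) =
      Function.update (loadsAt N ws t) (minIdx (loadsAt N ws t))
        (loadsAt N ws t (minIdx (loadsAt N ws t)) + ws[t]) := by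
  unfold loadsAt greedyLoads
  rw [List.take_succ, List.getElem?_eq_getElem ht, List.foldl_append]
  simp

lemma loadsAt_eq_sum (N F : ℕ) [NeZero N] (w : Fin F → ℝ) (t : ℕ) (ht : t ≤ F) (j : Fin N) :
    loadsAt N (List.ofFn w) t j =
      ∑ i ∈ Finset.univ.filter
          (fun i : Fin F => i.val < t ∧ minIdx (loadsAt N (List.ofFn w) i.val) = j), w i := by
  classical
  induction t with
  | zero =>
      rw [loadsAt_zero]
      have : (Finset.univ.filter
          (fun i : Fin F => i.val < 0 ∧ minIdx (loadsAt N (List.ofFn w) i.val) = j)) = ∅ := by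
        ext i; simp
      rw [this]; simp
  | succ t ih =>
      have htF : t < F := ht
      have htlen : t < (List.ofFn w).length := by simpa using htF
      have ihe := ih (le_of_lt htF)
      rw [loadsAt_succ N (List.ofFn w) t htlen]
      have hget : (List.ofFn w)[t] = w ⟨t, htF⟩ := by simp
      set m := minIdx (loadsAt N (List.ofFn w) t) with hm
      by_cases hjm : j = m
      · rw [hjm, Function.update_self]
        have hset : (Finset.univ.filter
            (fun i : Fin F => i.val < t + 1 ∧ minIdx (loadsAt N (List.ofFn w) i.val) = m))
            = insert (⟨t, htF⟩ : Fin F) (Finset.univ.filter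
            (fun i : Fin F => i.val < t ∧ minIdx (loadsAt N (List.ofFn w) i.val) = m)) := by
          ext i
          simp only [Finset.mem_filter, Finset.mem_univ, true_and, Finset.mem_insert]
          constructor
          · rintro ⟨hlt, hmin⟩
            rcases Nat.lt_succ_iff_lt_or_eq.mp hlt with h | h
            · exact Or.inr ⟨h, hmin⟩
            · exact Or.inl (Fin.ext h)
          · rintro (rfl | ⟨hlt, hmin⟩)
            · exact ⟨Nat.lt_succ_self t, hm.symm⟩
            · exact ⟨Nat.lt_succ_of_lt hlt, hmin⟩
        rw [hjm] at ihe
        rw [hset, Finset.sum_insert (by simp), ihe, hget]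
        ring
      · rw [Function.update_of_ne hjm]
        have hset : (Finset.univ.filter
            (fun i : Fin F => i.val < t + 1 ∧ minIdx (loadsAt N (List.ofFn w) i.val) = j))
            = (Finset.univ.filter
            (fun i : Fin F => i.val < t ∧ minIdx (loadsAt N (List.ofFn w) i.val) = j)) := by
          ext i
          simp only [Finset.mem_filter, Finset.mem_univ, true_and]
          constructor
          · rintro ⟨hlt, hmin⟩
            rcases Nat.lt_succ_iff_lt_or_eq.mp hlt with h | h
            · exact ⟨h, hmin⟩
            · exfalso
              have : i = (⟨t, htF⟩ : Fin F) := Fin.ext h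
              subst this
              exact hjm (hm.trans hmin).symm
          · rintro ⟨hlt, hmin⟩
            exact ⟨Nat.lt_succ_of_lt hlt, hmin⟩
        rw [hset, ihe]

lemma card_filter_val_lt (F t : ℕ) (ht : t ≤ F) :
    ((Finset.univ : Finset (Fin F)).filter fun i => i.val < t).card = t := by
  classical
  rw [Finset.card_bij' (fun (a : Fin F) (ha : a ∈ (Finset.univ : Finset (Fin F)).filter fun i => i.val < t) =>
        (⟨a.val, (Finset.mem_filter.mp ha).2⟩ : Fin t))
      (fun (b : Fin t) (_ : b ∈ (Finset.univ : Finset (Fin t))) => (⟨b.val, lt_of_lt_of_le b.isLt ht⟩ : Fin F))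
      (fun a ha => Finset.mem_univ _)
      (fun b hb => Finset.mem_filter.mpr ⟨Finset.mem_univ _, b.isLt⟩)
      (fun a ha => by ext; rfl)
      (fun b hb => by ext; rfl)]
  simp

lemma pairing_bound {N F : ℕ} [NeZero N] (w : Fin F → ℝ) (hw : ∀ i, 0 ≤ w i)
    (hsorted : ∀ i j : Fin F, i ≤ j → w j ≤ w i)
    (x : Fin F → Fin N) (T : ℝ)
    (hT : ∀ m : Fin N, ∑ i ∈ Finset.univ.filter (fun i => x i = m), w i ≤ T)
    (c : Fin F) (hcN : N ≤ c.val) (hc2N : c.val + 1 ≤ 2 * N)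
    (h2 : ∀ m : Fin N, (Finset.univ.filter (fun i : Fin F => i.val ≤ c.val ∧ x i = m)).card ≤ 2)
    (hj0F : 2 * N - 1 - c.val < F) :
    w ⟨2 * N - 1 - c.val, hj0F⟩ + w c ≤ T := by
  classical
  set j0 : ℕ := 2 * N - 1 - c.val with hj0
  by_cases hex : ∃ a b : Fin F, a.val ≤ j0 ∧ b.val ≤ c.val ∧ a ≠ b ∧ x a = x b
  · obtain ⟨a, b, haj, hbc, hab, hxab⟩ := hex
    have hwa : w a + w b ≤ ∑ i ∈ Finset.univ.filter (fun i => x i = x a), w i := by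
      rw [← Finset.sum_pair hab]
      apply Finset.sum_le_sum_of_subset_of_nonneg
      · intro i hi
        rcases Finset.mem_insert.mp hi with rfl | hi
        · exact Finset.mem_filter.mpr ⟨Finset.mem_univ _, rfl⟩
        · rw [Finset.mem_singleton.mp hi]
          exact Finset.mem_filter.mpr ⟨Finset.mem_univ _, hxab.symm⟩
      · intro i _ _; exact hw i
    have h1 : w (⟨j0, hj0F⟩ : Fin F) ≤ w a := hsorted a ⟨j0, hj0F⟩ haj
    have h2' : w c ≤ w b := hsorted b c hbc
    calc w (⟨j0, hj0F⟩ : Fin F) + w c ≤ w a + w b := add_le_add h1 h2'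
      _ ≤ _ := hwa
      _ ≤ T := hT (x a)
  · exfalso
    push_neg at hex
    have hj0N : j0 + 1 ≤ N := by omega
    have hj0c : j0 ≤ c.val := by omega
    set S : Finset (Fin F) := Finset.univ.filter (fun i : Fin F => i.val ≤ j0) with hS
    set P : Finset (Fin F) := Finset.univ.filter (fun i : Fin F => i.val ≤ c.val) with hP
    have hcardP : P.card = c.val + 1 := by
      have : P = Finset.univ.filter (fun i : Fin F => i.val < c.val + 1) := by
        ext i; simp [hP, Nat.lt_succ_iff]
      rw [this, card_filter_val_lt F (c.val + 1) c.isLt]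
    have hcardS : S.card = j0 + 1 := by
      have : S = Finset.univ.filter (fun i : Fin F => i.val < j0 + 1) := by
        ext i; simp [hS, Nat.lt_succ_iff]
      rw [this, card_filter_val_lt F (j0 + 1) (by omega)]
    have hfib : P.card = ∑ m : Fin N, (P.filter (fun i => x i = m)).card :=
      Finset.card_eq_sum_card_fiberwise (fun i _ => Finset.mem_univ (x i))
    set I : Finset (Fin N) := S.image x with hI
    have hinj : Set.InjOn x S := by
      intro a ha a' ha' hx
      by_contra hne
      exact hex a a' (by simpa [hS] using ha) (le_trans (by simpa [hS] using ha') hj0c) hne hx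
    have hcardI : I.card = j0 + 1 := by rw [hI, Finset.card_image_of_injOn hinj, hcardS]
    have hImem : ∀ m ∈ I, (P.filter (fun i => x i = m)).card ≤ 1 := by
      intro m hm
      obtain ⟨a, haS, rfl⟩ := Finset.mem_image.mp hm
      have hsub : P.filter (fun i => x i = x a) ⊆ {a} := by
        intro b hb
        obtain ⟨hbP, hxb⟩ := Finset.mem_filter.mp hb
        by_contra hba
        exact hex a b (by simpa [hS] using haS) (by simpa [hP] using hbP)
          (fun h => hba (by rw [h]; exact Finset.mem_singleton_self _)) hxb.symm
      calc (P.filter (fun i => x i = x a)).card ≤ ({a} : Finset (Fin F)).card :=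
            Finset.card_le_card hsub
        _ = 1 := Finset.card_singleton a
    have hIc : ∀ m : Fin N, (P.filter (fun i => x i = m)).card ≤ 2 := by
      intro m
      have : P.filter (fun i => x i = m)
          = Finset.univ.filter (fun i : Fin F => i.val ≤ c.val ∧ x i = m) := by
        rw [hP, Finset.filter_filter]
      rw [this]; exact h2 m
    have hsplit : ∑ m ∈ I, (P.filter (fun i => x i = m)).card
        + ∑ m ∈ Iᶜ, (P.filter (fun i => x i = m)).card
        = ∑ m : Fin N, (P.filter (fun i => x i = m)).card :=
      Finset.sum_add_sum_compl I _
    have hb1 : ∑ m ∈ I, (P.filter (fun i => x i = m)).card ≤ I.card * 1 := by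
      simpa using Finset.sum_le_card_nsmul I _ 1 hImem
    have hb2 : ∑ m ∈ Iᶜ, (P.filter (fun i => x i = m)).card ≤ Iᶜ.card * 2 := by
      simpa using Finset.sum_le_card_nsmul Iᶜ _ 2 (fun m _ => hIc m)
    have hcardIc : Iᶜ.card = N - I.card := by
      rw [Finset.card_compl, Fintype.card_fin]
    omega

lemma greedy_min_le {N F : ℕ} [NeZero N] (w : Fin F → ℝ) (hw : ∀ i, 0 ≤ w i)
    (hsorted : ∀ i j : Fin F, i ≤ j → w j ≤ w i)
    (A : Fin F → Fin N) (c : Fin F) (hcN : N ≤ c.val) (hc2N : c.val + 1 ≤ 2 * N)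
    (L : Fin N → ℝ)
    (hL : ∀ m, L m = ∑ i ∈ Finset.univ.filter (fun i : Fin F => i.val < c.val ∧ A i = m), w i)
    (hj0F : 2 * N - 1 - c.val < F) :
    ∃ m, L m ≤ w ⟨2 * N - 1 - c.val, hj0F⟩ := by
  classical
  set j0 : ℕ := 2 * N - 1 - c.val with hj0
  by_contra hcon
  push_neg at hcon
  set G : Fin N → Finset (Fin F) :=
    fun m => Finset.univ.filter (fun i : Fin F => i.val < c.val ∧ A i = m) with hGdef
  have hGsum : ∑ m : Fin N, (G m).card = c.val := by
    have h1 : ((Finset.univ : Finset (Fin F)).filter fun i => i.val < c.val).card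
        = ∑ m : Fin N, (((Finset.univ : Finset (Fin F)).filter fun i => i.val < c.val).filter
            (fun i => A i = m)).card :=
      Finset.card_eq_sum_card_fiberwise (fun i _ => Finset.mem_univ (A i))
    have h2 : ∀ m, ((Finset.univ : Finset (Fin F)).filter fun i => i.val < c.val).filter
        (fun i => A i = m) = G m := by
      intro m; rw [hGdef, Finset.filter_filter]
    rw [card_filter_val_lt F c.val (le_of_lt c.isLt)] at h1
    calc ∑ m : Fin N, (G m).card
        = ∑ m : Fin N, (((Finset.univ : Finset (Fin F)).filter fun i => i.val < c.val).filter
            (fun i => A i = m)).card := Finset.sum_congr rfl (fun m _ => by rw [h2 m])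
      _ = c.val := h1.symm
  have hne : ∀ m, (G m).Nonempty := by
    intro m
    rw [Finset.nonempty_iff_ne_empty]
    intro hemp
    have hL0 : L m = 0 := by rw [hL m, show Finset.univ.filter (fun i : Fin F => i.val < c.val ∧ A i = m) = G m from rfl, hemp, Finset.sum_empty]
    have := hcon m
    rw [hL0] at this
    exact absurd this (not_lt.mpr (hw _))
  set f : Fin N → Fin F := fun m => (G m).min' (hne m) with hf
  have hfmem : ∀ m, f m ∈ G m := fun m => Finset.min'_mem _ _
  have hfA : ∀ m, A (f m) = m := by
    intro m
    have := Finset.mem_filter.mp (hfmem m)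
    exact this.2.2
  set E : Finset (Fin N) := Finset.univ.filter (fun m => (G m).card = 1) with hE
  have hEsing : ∀ m ∈ E, G m = {f m} := by
    intro m hm
    obtain ⟨a, ha⟩ := Finset.card_eq_one.mp (Finset.mem_filter.mp hm).2
    have : f m ∈ ({a} : Finset (Fin F)) := ha ▸ hfmem m
    have hfa : f m = a := Finset.mem_singleton.mp this
    rw [hfa]; exact ha
  have hEj0 : ∀ m ∈ E, (f m).val < j0 := by
    intro m hm
    have hLm : L m = w (f m) := by
      rw [hL m, show Finset.univ.filter (fun i : Fin F => i.val < c.val ∧ A i = m) = G m from rfl,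
        hEsing m hm, Finset.sum_singleton]
    have hlt : w (⟨j0, hj0F⟩ : Fin F) < w (f m) := by
      have := hcon m; rw [hLm] at this; exact this
    by_contra hge
    push_neg at hge
    exact absurd hlt (not_lt.mpr (hsorted ⟨j0, hj0F⟩ (f m) hge))
  have hcardE : E.card ≤ j0 := by
    have hmaps : ∀ m ∈ E, f m ∈ Finset.univ.filter (fun i : Fin F => i.val < j0) :=
      fun m hm => Finset.mem_filter.mpr ⟨Finset.mem_univ _, hEj0 m hm⟩
    have hinj : Set.InjOn f E := by
      intro m hm m' hm' hff
      rw [← hfA m, ← hfA m', hff]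
    calc E.card ≤ (Finset.univ.filter (fun i : Fin F => i.val < j0)).card :=
          Finset.card_le_card_of_injOn f hmaps hinj
      _ = j0 := card_filter_val_lt F j0 (le_of_lt hj0F)
  have hsplit : ∑ m ∈ E, (G m).card + ∑ m ∈ Eᶜ, (G m).card = ∑ m : Fin N, (G m).card :=
    Finset.sum_add_sum_compl E _
  have hb2 : Eᶜ.card * 2 ≤ ∑ m ∈ Eᶜ, (G m).card := by
    have : ∀ m ∈ Eᶜ, 2 ≤ (G m).card := by
      intro m hm
      have h1 : (G m).card ≠ 1 := by
        intro h
        exact (Finset.mem_compl.mp hm) (Finset.mem_filter.mpr ⟨Finset.mem_univ _, h⟩)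
      have hpos : 0 < (G m).card := Finset.card_pos.mpr (hne m)
      omega
    simpa [mul_comm] using Finset.card_nsmul_le_sum Eᶜ _ 2 this
  have hsumE : ∑ m ∈ E, (G m).card = E.card := by
    rw [Finset.sum_congr rfl (fun m hm => (Finset.mem_filter.mp hm).2)]
    simp
    rfl
  have hEN : E.card ≤ N := le_trans (Finset.card_le_univ E) (by simp)
  have hcardEc : Eᶜ.card = N - E.card := by rw [Finset.card_compl, Fintype.card_fin]
  omega

/-- Graham's LPT bound: if the weights `w : Fin F → ℝ` are
nonnegative and sorted in nonincreasing order, and the greedy algorithm processes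
them in this order, then the resulting makespan is at most `(4/3 − 1/(3N))` times
the optimal makespan over all assignments `x : Fin F → Fin N`. -/
theorem lpt_approximation (N F : ℕ) [NeZero N] (w : Fin F → ℝ)
    (hw : ∀ i, 0 ≤ w i) (hsorted : ∀ i j : Fin F, i ≤ j → w j ≤ w i) :
    Finset.univ.sup' Finset.univ_nonempty (greedyLoads N (List.ofFn w)) ≤
      (4 / 3 - 1 / (3 * (N : ℝ))) *
        Finset.univ.inf' Finset.univ_nonempty
          (fun x : Fin F → Fin N =>
            Finset.univ.sup' Finset.univ_nonempty
              (fun j : Fin N => ∑ i ∈ Finset.univ.filter (fun i : Fin F => x i = j), w i)) := by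
  classical
  have hN1 : 1 ≤ N := Nat.one_le_iff_ne_zero.mpr (NeZero.ne N)
  have hNR : (1 : ℝ) ≤ (N : ℝ) := by exact_mod_cast hN1
  have hNpos : (0 : ℝ) < (N : ℝ) := lt_of_lt_of_le one_pos hNR
  have hK1 : (1 : ℝ) ≤ 4 / 3 - 1 / (3 * (N : ℝ)) := by
    have h3N : (3 : ℝ) ≤ 3 * N := by linarith
    have h1 : 1 / (3 * (N : ℝ)) ≤ 1 / 3 := by
      apply one_div_le_one_div_of_le (by norm_num) h3N
    linarith
  -- the optimal assignment
  obtain ⟨x₀, -, hx₀⟩ := Finset.exists_mem_eq_inf' (Finset.univ_nonempty)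
    (fun x : Fin F → Fin N =>
      Finset.univ.sup' Finset.univ_nonempty
        (fun j : Fin N => ∑ i ∈ Finset.univ.filter (fun i : Fin F => x i = j), w i))
  rw [hx₀]
  set T : ℝ := Finset.univ.sup' Finset.univ_nonempty
      (fun j : Fin N => ∑ i ∈ Finset.univ.filter (fun i : Fin F => x₀ i = j), w i) with hTdef
  have hT : ∀ m : Fin N, ∑ i ∈ Finset.univ.filter (fun i : Fin F => x₀ i = m), w i ≤ T := by
    intro m
    exact Finset.le_sup' (fun j : Fin N => ∑ i ∈ Finset.univ.filter (fun i : Fin F => x₀ i = j), w i) (Finset.mem_univ m)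
  have hT0 : (0 : ℝ) ≤ T := by
    obtain ⟨m0, -⟩ := (Finset.univ_nonempty : (Finset.univ : Finset (Fin N)).Nonempty)
    calc (0:ℝ) ≤ ∑ i ∈ Finset.univ.filter (fun i : Fin F => x₀ i = m0), w i :=
          Finset.sum_nonneg (fun i _ => hw i)
      _ ≤ T := hT m0
  have hTw : ∀ i : Fin F, w i ≤ T := by
    intro i
    calc w i ≤ ∑ k ∈ Finset.univ.filter (fun k : Fin F => x₀ k = x₀ i), w k :=
          Finset.single_le_sum (fun k _ => hw k)
            (Finset.mem_filter.mpr ⟨Finset.mem_univ i, rfl⟩)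
      _ ≤ T := hT (x₀ i)
  have hsumw : ∑ i : Fin F, w i ≤ (N : ℝ) * T := by
    have h1 : ∑ m : Fin N, ∑ i ∈ Finset.univ.filter (fun i : Fin F => x₀ i = m), w i
        = ∑ i : Fin F, w i :=
      Finset.sum_fiberwise_of_maps_to (fun i _ => Finset.mem_univ (x₀ i)) w
    rw [← h1]
    calc ∑ m : Fin N, ∑ i ∈ Finset.univ.filter (fun i : Fin F => x₀ i = m), w i
        ≤ ∑ _m : Fin N, T := Finset.sum_le_sum (fun m _ => hT m)
      _ = (N : ℝ) * T := by simp [mul_comm]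
  -- the maximal machine
  obtain ⟨mstar, -, hmstar⟩ := Finset.exists_mem_eq_sup' Finset.univ_nonempty
    (greedyLoads N (List.ofFn w))
  rw [hmstar]
  have hlen : (List.ofFn w).length = F := by simp
  have hGL : loadsAt N (List.ofFn w) F (mstar) = greedyLoads N (List.ofFn w) mstar := by
    unfold loadsAt
    rw [List.take_of_length_le (le_of_eq hlen)]
  rw [← hGL]
  set A : Fin F → Fin N := fun i => minIdx (loadsAt N (List.ofFn w) i.val) with hA
  have hrep : ∀ t : ℕ, t ≤ F → ∀ j : Fin N, loadsAt N (List.ofFn w) t j =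
      ∑ i ∈ Finset.univ.filter (fun i : Fin F => i.val < t ∧ A i = j), w i :=
    fun t ht j => loadsAt_eq_sum N F w t ht j
  set Fb : Finset (Fin F) := Finset.univ.filter (fun i : Fin F => A i = mstar) with hFb
  by_cases hFne : Fb.Nonempty
  · -- the critical job c
    set c : Fin F := Fb.max' hFne with hc
    have hAc : A c = mstar := (Finset.mem_filter.mp (Finset.max'_mem Fb hFne)).2
    have hcmax : ∀ i : Fin F, A i = mstar → i ≤ c :=
      fun i hi => Finset.le_max' Fb i (Finset.mem_filter.mpr ⟨Finset.mem_univ i, hi⟩)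
    have hclen : c.val < (List.ofFn w).length := by rw [hlen]; exact c.isLt
    -- step 1: final load of mstar = load just after job c
    have hstep1 : loadsAt N (List.ofFn w) F mstar = loadsAt N (List.ofFn w) (c.val + 1) mstar := by
      rw [hrep F le_rfl mstar, hrep (c.val + 1) c.isLt mstar]
      apply Finset.sum_congr _ (fun _ _ => rfl)
      ext i
      simp only [Finset.mem_filter, Finset.mem_univ, true_and]
      constructor
      · rintro ⟨-, hAi⟩
        exact ⟨Nat.lt_succ_of_le (hcmax i hAi), hAi⟩
      · rintro ⟨-, hAi⟩
        exact ⟨i.isLt, hAi⟩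
    -- step 2: load after job c = load before + w c
    have hminc : minIdx (loadsAt N (List.ofFn w) c.val) = mstar := hAc
    have hstep2 : loadsAt N (List.ofFn w) (c.val + 1) mstar
        = loadsAt N (List.ofFn w) c.val mstar + w c := by
      rw [loadsAt_succ N (List.ofFn w) c.val hclen, hminc, Function.update_self]
      congr 1
      simp
    have hminle : ∀ i : Fin N,
        loadsAt N (List.ofFn w) c.val mstar ≤ loadsAt N (List.ofFn w) c.val i := by
      intro i
      rw [← hminc]
      exact minIdx_le _ i
    -- averaging bound
    have havg : (N : ℝ) * loadsAt N (List.ofFn w) c.val mstar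
        ≤ ∑ i ∈ Finset.univ.filter (fun i : Fin F => i.val < c.val), w i := by
      have h1 : (N : ℝ) * loadsAt N (List.ofFn w) c.val mstar
          ≤ ∑ j : Fin N, loadsAt N (List.ofFn w) c.val j := by
        have := Finset.card_nsmul_le_sum Finset.univ (loadsAt N (List.ofFn w) c.val)
          (loadsAt N (List.ofFn w) c.val mstar) (fun j _ => hminle j)
        simpa [mul_comm, nsmul_eq_mul] using this
      have h2 : ∑ j : Fin N, loadsAt N (List.ofFn w) c.val j
          = ∑ i ∈ Finset.univ.filter (fun i : Fin F => i.val < c.val), w i := by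
        have h3 : ∀ j : Fin N, loadsAt N (List.ofFn w) c.val j
            = ∑ i ∈ (Finset.univ.filter (fun i : Fin F => i.val < c.val)).filter
                (fun i => A i = j), w i := by
          intro j
          rw [hrep c.val (le_of_lt c.isLt) j]
          apply Finset.sum_congr _ (fun _ _ => rfl)
          rw [Finset.filter_filter]
        rw [Finset.sum_congr rfl (fun j _ => h3 j)]
        exact Finset.sum_fiberwise_of_maps_to (fun i _ => Finset.mem_univ (A i)) w
      linarith
    have hsum_lt : ∑ i ∈ Finset.univ.filter (fun i : Fin F => i.val < c.val), w i + w c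
        ≤ (N : ℝ) * T := by
      have hnotmem : c ∉ Finset.univ.filter (fun i : Fin F => i.val < c.val) := by simp
      have h1 : ∑ i ∈ Finset.univ.filter (fun i : Fin F => i.val < c.val), w i + w c
          = ∑ i ∈ insert c (Finset.univ.filter (fun i : Fin F => i.val < c.val)), w i := by
        rw [Finset.sum_insert hnotmem]; ring
      rw [h1]
      calc ∑ i ∈ insert c (Finset.univ.filter (fun i : Fin F => i.val < c.val)), w i
          ≤ ∑ i : Fin F, w i := Finset.sum_le_sum_of_subset_of_nonneg
            (fun i _ => Finset.mem_univ i) (fun i _ _ => hw i)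
        _ ≤ (N : ℝ) * T := hsumw
    rw [hstep1, hstep2]
    by_cases hwc : w c ≤ T / 3
    · -- easy case
      have hload : loadsAt N (List.ofFn w) c.val mstar ≤ T - w c / (N : ℝ) := by
        rw [← mul_le_mul_iff_right₀ hNpos]
        have he : (N : ℝ) * (T - w c / (N : ℝ)) = (N : ℝ) * T - w c := by
          field_simp
        rw [he]
        linarith
      have h1N : (0 : ℝ) ≤ 1 - 1 / (N : ℝ) := by
        have : 1 / (N : ℝ) ≤ 1 := by
          rw [div_le_one hNpos]; exact hNR
        linarith
      calc loadsAt N (List.ofFn w) c.val mstar + w c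
          ≤ T - w c / (N : ℝ) + w c := by linarith
        _ = T + (1 - 1 / (N : ℝ)) * w c := by ring
        _ ≤ T + (1 - 1 / (N : ℝ)) * (T / 3) := by
            have := mul_le_mul_of_nonneg_left hwc h1N
            linarith
        _ = (4 / 3 - 1 / (3 * (N : ℝ))) * T := by
            field_simp
            ring
    · -- hard case : all jobs up to c are big
      push_neg at hwc
      have hMT : loadsAt N (List.ofFn w) c.val mstar + w c ≤ T := by
        have hbig : ∀ i : Fin F, i.val ≤ c.val → T / 3 < w i :=
          fun i hi => lt_of_lt_of_le hwc (hsorted i c hi)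
        -- each machine gets at most 2 jobs from {0..c} in the optimal assignment
        have h2fib : ∀ m : Fin N,
            (Finset.univ.filter (fun i : Fin F => i.val ≤ c.val ∧ x₀ i = m)).card ≤ 2 := by
          intro m
          by_contra hgt
          push_neg at hgt
          set Q : Finset (Fin F) :=
            Finset.univ.filter (fun i : Fin F => i.val ≤ c.val ∧ x₀ i = m) with hQ
          have hQ3 : 3 ≤ Q.card := hgt
          obtain ⟨a, ha⟩ := Finset.card_pos.mp (lt_of_lt_of_le (by norm_num) hQ3)
          have haQ := Finset.mem_filter.mp ha
          have hsum1 : w a + ∑ i ∈ Q.erase a, w i = ∑ i ∈ Q, w i :=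
            Finset.add_sum_erase Q w ha
          have hsum2 : (2 : ℕ) • (T / 3) ≤ ∑ i ∈ Q.erase a, w i := by
            have hcard : 2 ≤ (Q.erase a).card := by
              rw [Finset.card_erase_of_mem ha]; omega
            have hb : ∀ i ∈ Q.erase a, T / 3 ≤ w i := by
              intro i hi
              have := Finset.mem_filter.mp (Finset.mem_of_mem_erase hi)
              exact le_of_lt (hbig i this.2.1)
            calc (2 : ℕ) • (T / 3) ≤ (Q.erase a).card • (T / 3) := by
                  apply nsmul_le_nsmul_left (by linarith) hcard
              _ ≤ ∑ i ∈ Q.erase a, w i := Finset.card_nsmul_le_sum _ _ _ hb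
          have hQle : ∑ i ∈ Q, w i ≤ T := by
            calc ∑ i ∈ Q, w i
                ≤ ∑ i ∈ Finset.univ.filter (fun i : Fin F => x₀ i = m), w i := by
                  apply Finset.sum_le_sum_of_subset_of_nonneg
                  · intro i hi
                    exact Finset.mem_filter.mpr
                      ⟨Finset.mem_univ i, (Finset.mem_filter.mp hi).2.2⟩
                  · intro i _ _; exact hw i
              _ ≤ T := hT m
          have hwa : T / 3 < w a := hbig a haQ.2.1
          have h2T : (2 : ℕ) • (T / 3) = 2 * (T / 3) := by simp [nsmul_eq_mul]
          rw [h2T] at hsum2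
          linarith
        -- c is bounded: c+1 ≤ 2N
        have hc2N : c.val + 1 ≤ 2 * N := by
          have hcardP : (Finset.univ.filter (fun i : Fin F => i.val ≤ c.val)).card
              = c.val + 1 := by
            have : (Finset.univ.filter (fun i : Fin F => i.val ≤ c.val))
                = Finset.univ.filter (fun i : Fin F => i.val < c.val + 1) := by
              ext i; simp [Nat.lt_succ_iff]
            rw [this, card_filter_val_lt F (c.val + 1) c.isLt]
          have hfib : (Finset.univ.filter (fun i : Fin F => i.val ≤ c.val)).card
              = ∑ m : Fin N, ((Finset.univ.filter (fun i : Fin F => i.val ≤ c.val)).filter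
                  (fun i => x₀ i = m)).card :=
            Finset.card_eq_sum_card_fiberwise (fun i _ => Finset.mem_univ (x₀ i))
          have hb : ∑ m : Fin N, ((Finset.univ.filter (fun i : Fin F => i.val ≤ c.val)).filter
              (fun i => x₀ i = m)).card ≤ 2 * N := by
            calc ∑ m : Fin N, ((Finset.univ.filter (fun i : Fin F => i.val ≤ c.val)).filter
                (fun i => x₀ i = m)).card
                ≤ ∑ _m : Fin N, 2 := by
                  apply Finset.sum_le_sum
                  intro m _
                  rw [Finset.filter_filter]
                  exact h2fib m
              _ = 2 * N := by simp [mul_comm]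
          omega
        by_cases hcN : c.val < N
        · -- some machine is still empty, so min load = 0
          have hGsum : ∑ m : Fin N, ((Finset.univ.filter
              (fun i : Fin F => i.val < c.val ∧ A i = m))).card = c.val := by
            have h1 : ((Finset.univ : Finset (Fin F)).filter fun i => i.val < c.val).card
                = ∑ m : Fin N, (((Finset.univ : Finset (Fin F)).filter
                    fun i => i.val < c.val).filter (fun i => A i = m)).card :=
              Finset.card_eq_sum_card_fiberwise (fun i _ => Finset.mem_univ (A i))
            rw [card_filter_val_lt F c.val (le_of_lt c.isLt)] at h1
            calc ∑ m : Fin N, ((Finset.univ.filter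
                (fun i : Fin F => i.val < c.val ∧ A i = m))).card
                = ∑ m : Fin N, (((Finset.univ : Finset (Fin F)).filter
                    fun i => i.val < c.val).filter (fun i => A i = m)).card :=
                  Finset.sum_congr rfl (fun m _ => by rw [Finset.filter_filter])
              _ = c.val := h1.symm
          have hex0 : ∃ m : Fin N, ((Finset.univ.filter
              (fun i : Fin F => i.val < c.val ∧ A i = m))).card = 0 := by
            by_contra hno
            push_neg at hno
            have : ∀ m : Fin N, 1 ≤ ((Finset.univ.filter
                (fun i : Fin F => i.val < c.val ∧ A i = m))).card :=
              fun m => Nat.one_le_iff_ne_zero.mpr (hno m)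
            have hge : N ≤ ∑ m : Fin N, ((Finset.univ.filter
                (fun i : Fin F => i.val < c.val ∧ A i = m))).card := by
              calc N = ∑ _m : Fin N, 1 := by simp
                _ ≤ _ := Finset.sum_le_sum (fun m _ => this m)
            omega
          obtain ⟨m0, hm0⟩ := hex0
          have hL0 : loadsAt N (List.ofFn w) c.val m0 = 0 := by
            rw [hrep c.val (le_of_lt c.isLt) m0, Finset.card_eq_zero.mp hm0, Finset.sum_empty]
          have := hminle m0
          rw [hL0] at this
          linarith [hTw c]
        · -- main subcase: N ≤ c, use the pairing bound
          push_neg at hcN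
          have hj0F : 2 * N - 1 - c.val < F := by
            have := c.isLt
            omega
          obtain ⟨m1, hm1⟩ := greedy_min_le w hw hsorted A c hcN hc2N
            (loadsAt N (List.ofFn w) c.val)
            (fun m => hrep c.val (le_of_lt c.isLt) m) hj0F
          have hpair : w ⟨2 * N - 1 - c.val, hj0F⟩ + w c ≤ T :=
            pairing_bound w hw hsorted x₀ T hT c hcN hc2N h2fib hj0F
          have := hminle m1
          linarith
      calc loadsAt N (List.ofFn w) c.val mstar + w c ≤ T := hMT
        _ = 1 * T := (one_mul T).symm
        _ ≤ (4 / 3 - 1 / (3 * (N : ℝ))) * T := mul_le_mul_of_nonneg_right hK1 hT0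
  · -- machine mstar got no job at all: its load is 0
    have hMz : loadsAt N (List.ofFn w) F mstar = 0 := by
      rw [hrep F le_rfl mstar]
      have : Finset.univ.filter (fun i : Fin F => i.val < F ∧ A i = mstar) = ∅ := by
        rw [Finset.not_nonempty_iff_eq_empty] at hFne
        ext i
        simp only [Finset.mem_filter, Finset.mem_univ, true_and, Finset.notMem_empty,
          iff_false]
        rintro ⟨-, hAi⟩
        have : i ∈ Fb := Finset.mem_filter.mpr ⟨Finset.mem_univ i, hAi⟩
        rw [hFne] at this
        exact absurd this (Finset.notMem_empty i)
      rw [this, Finset.sum_empty]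
    rw [hMz]
    have hK0 : (0 : ℝ) ≤ 4 / 3 - 1 / (3 * (N : ℝ)) := by linarith
    positivity
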